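/- For every real $q$ with $|q|<1/4$, the series $I_0(q)=\sum_{d\ge 0}\binom{2d}{d} q^d$ and $I_1(q)=2\sum_{d\ge 1}\binom{2d}{d}\,(H_{2d}-H_d)\, q^d$ converge, $I_0(q)\ne 0$, the quotient $I_1/I_0$ is differentiable on $(-1/4,1/4)$, and the identity $1 + q\,\frac{d}{dq}\Big(\frac{I_1}{I_0}\Big)(q) = \frac{1}{\sqrt{1-4q}}$ holds. -/

import Mathlib

open Real

/-- `I₀(q) = ∑_{d ≥ 0} C(2d, d) q^d`. -/
noncomputable def I₀ (q : ℝ) : ℝ := ∑' d : ℕ, (Nat.centralBinom d : ℝ) * q ^ d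

/-- `I₁(q) = 2 ∑_{d ≥ 1} C(2d, d) (H_{2d} - H_d) q^d` (the `d = 0` term vanishes). -/
noncomputable def I₁ (q : ℝ) : ℝ :=
  2 * ∑' d : ℕ, (Nat.centralBinom d : ℝ) * ((harmonic (2 * d) : ℝ) - (harmonic d : ℝ)) * q ^ d
namespace Aux
noncomputable def c (d : ℕ) : ℝ := (Nat.centralBinom d : ℝ)

lemma c_pos (d : ℕ) : 0 < c d := by
  unfold c; exact_mod_cast Nat.centralBinom_pos d

lemma c_rec (d : ℕ) : ((d : ℝ) + 1) * c (d + 1) = (4 * d + 2) * c d := by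
  have := Nat.succ_mul_centralBinom_succ d
  have h : ((d + 1) * Nat.centralBinom (d + 1) : ℝ) = ((2 * (2 * d + 1) * Nat.centralBinom d : ℕ) : ℝ) := by
    exact_mod_cast congrArg (Nat.cast : ℕ → ℝ) this
  push_cast at h
  unfold c; push_cast; linarith

lemma c_le (d : ℕ) : c d ≤ 4 ^ d := by
  induction d with
  | zero => simp [c, Nat.centralBinom]
  | succ n ih =>
    have h := c_rec n
    have h1 : ((n : ℝ) + 1) * c (n + 1) ≤ (4 * n + 4) * 4 ^ n := by
      rw [h]
      have : (4 * (n:ℝ) + 2) ≤ 4 * n + 4 := by linarith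
      nlinarith [c_pos n, (c_pos n).le, pow_pos (show (0:ℝ) < 4 by norm_num) n]
    have hn : (0:ℝ) < (n:ℝ) + 1 := by positivity
    have : ((n:ℝ) + 1) * c (n+1) ≤ ((n:ℝ)+1) * 4 ^ (n+1) := by
      calc ((n:ℝ) + 1) * c (n + 1) ≤ (4 * n + 4) * 4 ^ n := h1
        _ = ((n:ℝ)+1) * 4 ^ (n+1) := by ring
    exact le_of_mul_le_mul_left this hn

lemma hdiff_bounds (d : ℕ) : 0 ≤ harmonic (2*d) - harmonic d ∧
    harmonic (2*d) - harmonic d ≤ 1 - 1/(2*(d:ℚ)+1) := by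
  induction d with
  | zero => norm_num
  | succ n ih =>
    obtain ⟨h1, h2⟩ := ih
    have e1 : 2 * (n+1) = (2*n + 1) + 1 := by ring
    rw [e1, harmonic_succ, harmonic_succ, harmonic_succ]
    push_cast
    have p1 : (0:ℚ) < 2*(n:ℚ)+1 := by positivity
    have p2 : (0:ℚ) < 2*(n:ℚ)+2 := by positivity
    have r1 : ((2*(n:ℚ)+1+1))⁻¹ = ((2*(n:ℚ)+2))⁻¹ := by ring_nf
    have r2 : 1/(2*((n:ℚ)+1)+1) = ((2*(n:ℚ)+3))⁻¹ := by rw [one_div]; ring_nf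
    have h2' : harmonic (2*n) - harmonic n ≤ 1 - ((2*(n:ℚ)+1))⁻¹ := by
      rw [← one_div]; exact h2
    have key : ((n:ℚ)+1)⁻¹ = ((2*(n:ℚ)+2))⁻¹ * 2 := by
      field_simp
    have q1 : (0:ℚ) < ((2*(n:ℚ)+1))⁻¹ := by positivity
    have h5 : ((2*(n:ℚ)+3))⁻¹ ≤ ((2*(n:ℚ)+2))⁻¹ := by
      apply inv_anti₀ p2; linarith
    have h4 : ((2*(n:ℚ)+2))⁻¹ ≤ ((2*(n:ℚ)+1))⁻¹ := by
      apply inv_anti₀ p1; linarith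
    rw [r1, r2, key]
    constructor <;> linarith

lemma summable_geom_aux {r : ℝ} (hr0 : 0 ≤ r) (hr : r < 1) (K : ℝ) :
    Summable (fun d : ℕ => K * (((d:ℝ)+1) * r ^ d)) := by
  apply Summable.mul_left
  have h1 : Summable (fun d : ℕ => (d:ℝ) * r ^ d) := by
    have := summable_pow_mul_geometric_of_norm_lt_one (R := ℝ) 1 (by rwa [Real.norm_eq_abs, abs_of_nonneg hr0])
    simpa using this
  have h2 : Summable (fun d : ℕ => r ^ d) := summable_geometric_of_lt_one hr0 hr
  have := h1.add h2
  apply this.congr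
  intro d; ring

lemma summable_aux {f : ℕ → ℝ} {K : ℝ} (h : ∀ d, |f d| ≤ K * ((d:ℝ)+1) * 4 ^ d)
    {x : ℝ} (hx : |x| < 1/4) : Summable fun d => f d * x ^ d := by
  have hr0 : (0:ℝ) ≤ 4 * |x| := by positivity
  have hr : 4 * |x| < 1 := by linarith
  apply Summable.of_norm_bounded (summable_geom_aux hr0 hr K)
  intro d
  have : ‖f d * x ^ d‖ = |f d| * |x| ^ d := by
    rw [norm_mul, Real.norm_eq_abs, Real.norm_eq_abs, abs_pow]
  rw [this]
  calc |f d| * |x| ^ d ≤ (K * ((d:ℝ)+1) * 4 ^ d) * |x| ^ d := by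
        apply mul_le_mul_of_nonneg_right (h d) (by positivity)
    _ = K * (((d:ℝ)+1) * (4*|x|) ^ d) := by rw [mul_pow]; ring

lemma hasDerivAt_tsum_aux {f : ℕ → ℝ} {K : ℝ} (h : ∀ d, |f d| ≤ K * 4 ^ d)
    {x : ℝ} (hx : |x| < 1/4) :
    HasDerivAt (fun y => ∑' d, f d * y ^ d) (∑' d : ℕ, ((d:ℝ)+1) * f (d+1) * x ^ d) x := by
  set r : ℝ := (|x| + 1/4)/2 with hrdef
  have hxr : |x| < r := by simp only [hrdef]; linarith
  have hr4 : r < 1/4 := by simp only [hrdef]; linarith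
  have hr0 : 0 < r := lt_of_le_of_lt (abs_nonneg x) hxr
  set u : ℕ → ℝ := fun d => K * 4 ^ d * ((d:ℝ) * r ^ (d-1)) with hudef
  have hu : Summable u := by
    rw [← summable_nat_add_iff 1]
    have : Summable (fun d : ℕ => (4*K) * (((d:ℝ)+1) * (4*r) ^ d)) :=
      summable_geom_aux (by positivity) (by linarith) _
    apply this.congr
    intro d
    simp only [hudef, Nat.add_sub_cancel]
    push_cast
    rw [mul_pow]
    ring
  have hbound : ∀ (d : ℕ) (y : ℝ), y ∈ Set.Ioo (-r) r → ‖f d * ((d:ℝ) * y ^ (d-1))‖ ≤ u d := by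
    intro d y hy
    have hyr : |y| ≤ r := by
      rw [abs_le]; exact ⟨hy.1.le, hy.2.le⟩
    rw [norm_mul, Real.norm_eq_abs, Real.norm_eq_abs, abs_mul, abs_pow, Nat.abs_cast]
    simp only [hudef]
    have h1 : |y| ^ (d-1) ≤ r ^ (d-1) := pow_le_pow_left₀ (abs_nonneg y) hyr _
    have hK : (0:ℝ) ≤ K * 4 ^ d := le_trans (abs_nonneg _) (h d)
    calc |f d| * ((d:ℝ) * |y| ^ (d-1)) ≤ (K * 4 ^ d) * ((d:ℝ) * r ^ (d-1)) := by
          apply mul_le_mul (h d) _ (by positivity) hK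
          exact mul_le_mul_of_nonneg_left h1 (Nat.cast_nonneg d)
      _ = u d := rfl
  have hmem : x ∈ Set.Ioo (-r) r := by
    rw [Set.mem_Ioo, ← abs_lt]; exact hxr
  have h0mem : (0:ℝ) ∈ Set.Ioo (-r) r := by
    rw [Set.mem_Ioo, ← abs_lt]; simpa using hr0
  have hsum0 : Summable (fun d : ℕ => f d * (0:ℝ) ^ d) := by
    apply summable_of_ne_finset_zero (s := {0})
    intro d hd
    have : d ≠ 0 := by simpa using hd
    simp [zero_pow this]
  have key : HasDerivAt (fun y => ∑' d, f d * y ^ d)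
      (∑' d : ℕ, f d * ((d:ℝ) * x ^ (d-1))) x := by
    apply hasDerivAt_tsum_of_isPreconnected hu isOpen_Ioo (convex_Ioo _ _).isPreconnected
      (fun d y _ => (hasDerivAt_pow d y).const_mul (f d)) hbound h0mem hsum0 hmem
  have hshift : (∑' d : ℕ, f d * ((d:ℝ) * x ^ (d-1)))
      = ∑' d : ℕ, ((d:ℝ)+1) * f (d+1) * x ^ d := by
    have hs : Summable (fun d : ℕ => f d * ((d:ℝ) * x ^ (d-1))) :=
      Summable.of_norm_bounded hu (fun d => hbound d x hmem)
    rw [Summable.tsum_eq_zero_add hs]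
    simp only [Nat.cast_zero, zero_mul, mul_zero, zero_add]
    apply tsum_congr
    intro d
    push_cast [Nat.add_sub_cancel]
    ring
  rw [← hshift]
  exact key


noncomputable def e (d : ℕ) : ℝ := c d * ((harmonic (2*d) : ℝ) - (harmonic d : ℝ))

noncomputable def l : ℕ → ℝ
  | 0 => 0
  | (n+1) => c n / ((n:ℝ)+1)

lemma hdiff_nonneg (d : ℕ) : 0 ≤ ((harmonic (2*d) : ℝ) - (harmonic d : ℝ)) := by
  have := (hdiff_bounds d).1
  have : ((harmonic d : ℚ) : ℝ) ≤ ((harmonic (2*d) : ℚ) : ℝ) := by exact_mod_cast by linarith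
  linarith

lemma hdiff_le_one (d : ℕ) : ((harmonic (2*d) : ℝ) - (harmonic d : ℝ)) ≤ 1 := by
  have h := (hdiff_bounds d).2
  have hq : harmonic (2*d) - harmonic d ≤ 1 := by
    have : (0:ℚ) ≤ 1/(2*(d:ℚ)+1) := by positivity
    linarith
  have : ((harmonic (2*d) : ℚ) : ℝ) - ((harmonic d : ℚ) : ℝ) ≤ ((1:ℚ):ℝ) := by
    exact_mod_cast by push_cast; linarith [hq]
  simpa using this

lemma e_abs_le (d : ℕ) : |e d| ≤ 4 ^ d := by
  unfold e
  rw [abs_mul, abs_of_pos (c_pos d), abs_of_nonneg (hdiff_nonneg d)]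
  calc c d * ((harmonic (2*d) : ℝ) - (harmonic d : ℝ)) ≤ c d * 1 :=
        mul_le_mul_of_nonneg_left (hdiff_le_one d) (c_pos d).le
    _ ≤ 4 ^ d := by rw [mul_one]; exact c_le d

lemma c_abs_le (d : ℕ) : |c d| ≤ 4 ^ d := by
  rw [abs_of_pos (c_pos d)]; exact c_le d

lemma l_abs_le (d : ℕ) : |l d| ≤ 4 ^ d := by
  cases d with
  | zero => simp [l]
  | succ n =>
    have h1 : (0:ℝ) < (n:ℝ)+1 := by positivity
    have : |l (n+1)| = c n / ((n:ℝ)+1) := by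
      rw [abs_of_nonneg]; · rfl
      · exact div_nonneg (c_pos n).le h1.le
    rw [this]
    calc c n / ((n:ℝ)+1) ≤ c n := by
          apply div_le_self (c_pos n).le; linarith
      _ ≤ 4 ^ n := c_le n
      _ ≤ 4 ^ (n+1) := by
          apply pow_le_pow_right₀ (by norm_num) (by omega)

lemma e_rec (d : ℕ) : ((d:ℝ)+1) * e (d+1) = (4*(d:ℝ)+2) * e d + c d / ((d:ℝ)+1) := by
  unfold e
  have hH2 : ((harmonic (2*(d+1)) : ℚ) : ℝ)
      = ((harmonic (2*d) : ℚ) : ℝ) + (2*(d:ℝ)+1)⁻¹ + (2*(d:ℝ)+2)⁻¹ := by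
    have e1 : 2*(d+1) = (2*d+1)+1 := by ring
    rw [e1, harmonic_succ, harmonic_succ]
    push_cast
    ring
  have hH1 : ((harmonic (d+1) : ℚ) : ℝ) = ((harmonic d : ℚ) : ℝ) + ((d:ℝ)+1)⁻¹ := by
    rw [harmonic_succ]; push_cast; ring
  rw [hH2, hH1]
  have hc := c_rec d
  have p1 : (0:ℝ) < 2*(d:ℝ)+1 := by positivity
  have p2 : (0:ℝ) < 2*(d:ℝ)+2 := by positivity
  have p3 : (0:ℝ) < (d:ℝ)+1 := by positivity
  have hsub : c (d+1) = (4*(d:ℝ)+2) * c d / ((d:ℝ)+1) := by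
    field_simp
    linarith [hc]
  rw [hsub]
  field_simp
  ring
noncomputable def S (x : ℝ) : ℝ := Real.sqrt (1 - 4*x)

lemma one_sub_pos {x : ℝ} (hx : |x| < 1/4) : 0 < 1 - 4*x := by
  rw [abs_lt] at hx; linarith

lemma S_pos {x : ℝ} (hx : |x| < 1/4) : 0 < S x := Real.sqrt_pos.2 (one_sub_pos hx)

lemma S_sq {x : ℝ} (hx : |x| < 1/4) : S x * S x = 1 - 4*x :=
  Real.mul_self_sqrt (one_sub_pos hx).le

lemma hasDerivAt_S {x : ℝ} (hx : |x| < 1/4) : HasDerivAt S (-2 / S x) x := by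
  have h2 : HasDerivAt (fun y : ℝ => 1 - 4*y) (-4) x := by
    exact (((hasDerivAt_id' x).const_mul (4:ℝ)).const_sub (1:ℝ)).congr_deriv (by ring)
  have h3 := h2.sqrt (one_sub_pos hx).ne'
  convert h3 using 1
  · rfl
  unfold S
  rw [div_eq_div_iff ((Real.sqrt_pos.2 (one_sub_pos hx)).ne') (mul_ne_zero two_ne_zero (Real.sqrt_pos.2 (one_sub_pos hx)).ne')]
  ring

lemma S_zero : S 0 = 1 := by simp [S]

lemma const_aux {f : ℝ → ℝ} (h : ∀ x ∈ Set.Ioo (-(1/4):ℝ) (1/4), HasDerivAt f 0 x)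
    {x : ℝ} (hx : x ∈ Set.Ioo (-(1/4):ℝ) (1/4)) : f x = f 0 := by
  have h0 : (0:ℝ) ∈ Set.Ioo (-(1/4):ℝ) (1/4) := by norm_num
  apply (convex_Ioo _ _).is_const_of_fderivWithin_eq_zero
    (fun y hy => (h y hy).differentiableAt.differentiableWithinAt) _ hx h0
  intro y hy
  rw [fderivWithin_of_isOpen isOpen_Ioo hy]
  have h2 := ((hasDerivAt_iff_hasFDerivAt).1 (h y hy)).fderiv
  rw [h2]
  ext z
  simp

lemma mem_iff {x : ℝ} : x ∈ Set.Ioo (-(1/4):ℝ) (1/4) ↔ |x| < 1/4 := by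
  rw [Set.mem_Ioo, abs_lt]


noncomputable def D0 (x : ℝ) : ℝ := ∑' d : ℕ, ((d:ℝ)+1) * c (d+1) * x ^ d

lemma I0_eq (x : ℝ) : I₀ x = ∑' d : ℕ, c d * x ^ d := rfl

lemma hasDerivAt_I0 {x : ℝ} (hx : |x| < 1/4) : HasDerivAt I₀ (D0 x) x := by
  exact hasDerivAt_tsum_aux (K := 1) (fun d => by rw [one_mul]; exact c_abs_le d) hx

lemma summable_c {x : ℝ} (hx : |x| < 1/4) : Summable (fun d : ℕ => c d * x ^ d) := by
  apply summable_aux (K := 1) _ hx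
  intro d
  rw [one_mul]
  calc |c d| ≤ 4 ^ d := c_abs_le d
    _ ≤ ((d:ℝ)+1) * 4 ^ d := by nlinarith [pow_pos (show (0:ℝ) < 4 by norm_num) d, Nat.cast_nonneg (α := ℝ) d]

lemma summable_dc {x : ℝ} (hx : |x| < 1/4) : Summable (fun d : ℕ => (d:ℝ) * c d * x ^ d) := by
  apply summable_aux (K := 1) _ hx
  intro d
  rw [one_mul, abs_mul, Nat.abs_cast, abs_of_pos (c_pos d)]
  have := c_le d
  have h4 : (0:ℝ) < 4 ^ d := pow_pos (by norm_num) d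
  have : (d:ℝ) * c d ≤ (d:ℝ) * 4 ^ d := by
    apply mul_le_mul_of_nonneg_left (c_le d) (Nat.cast_nonneg d)
  nlinarith [Nat.cast_nonneg (α := ℝ) d, c_pos d]

lemma summable_4d2c {x : ℝ} (hx : |x| < 1/4) :
    Summable (fun d : ℕ => (4*(d:ℝ)+2) * c d * x ^ d) := by
  apply summable_aux (K := 4) _ hx
  intro d
  rw [abs_mul, abs_of_pos (c_pos d)]
  have h1 : |4*(d:ℝ)+2| = 4*(d:ℝ)+2 := abs_of_pos (by positivity)
  rw [h1]
  have h4 : (0:ℝ) < 4 ^ d := pow_pos (by norm_num) d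
  have hc := c_le d
  have hc0 := (c_pos d).le
  nlinarith [Nat.cast_nonneg (α := ℝ) d]

lemma xD0 {x : ℝ} (hx : |x| < 1/4) : x * D0 x = ∑' d : ℕ, (d:ℝ) * c d * x ^ d := by
  have h1 : x * D0 x = ∑' d : ℕ, ((d:ℝ)+1) * c (d+1) * x ^ (d+1) := by
    rw [D0, ← tsum_mul_left]
    apply tsum_congr; intro d; ring
  rw [h1, Summable.tsum_eq_zero_add (summable_dc hx)]
  push_cast
  simp

lemma D0_c {x : ℝ} : D0 x = ∑' d : ℕ, (4*(d:ℝ)+2) * c d * x ^ d := by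
  rw [D0]
  apply tsum_congr; intro d
  rw [c_rec d]

lemma D0_eq {x : ℝ} (hx : |x| < 1/4) : (1 - 4*x) * D0 x = 2 * I₀ x := by
  have sB : Summable (fun d : ℕ => 4*((d:ℝ) * c d * x ^ d)) := (summable_dc hx).mul_left 4
  calc (1 - 4*x) * D0 x = D0 x - 4*(x * D0 x) := by ring
    _ = (∑' d : ℕ, (4*(d:ℝ)+2) * c d * x ^ d) - ∑' d : ℕ, 4*((d:ℝ) * c d * x ^ d) := by
        rw [xD0 hx, D0_c, ← tsum_mul_left]
    _ = ∑' d : ℕ, ((4*(d:ℝ)+2) * c d * x ^ d - 4*((d:ℝ) * c d * x ^ d)) :=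
        (Summable.tsum_sub (summable_4d2c hx) sB).symm
    _ = ∑' d : ℕ, 2 * (c d * x ^ d) := by apply tsum_congr; intro d; ring
    _ = 2 * I₀ x := by rw [tsum_mul_left, I0_eq]

lemma I0_zero : I₀ 0 = 1 := by
  rw [I0_eq, tsum_eq_single 0 (fun b hb => by simp [zero_pow hb])]
  simp [c, Nat.centralBinom]

lemma I0_closed {x : ℝ} (hx : |x| < 1/4) : I₀ x * S x = 1 := by
  have h : ∀ y ∈ Set.Ioo (-(1/4):ℝ) (1/4), HasDerivAt (fun z => I₀ z * S z) 0 y := by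
    intro y hy
    have hy' : |y| < 1/4 := mem_iff.1 hy
    have hd := (hasDerivAt_I0 hy').mul (hasDerivAt_S hy')
    have hval : D0 y * S y + I₀ y * (-2 / S y) = 0 := by
      have hS := S_pos hy'
      have hsq := S_sq hy'
      have h2 := D0_eq hy'
      have e1 : I₀ y * (-2 / S y) * S y = -2 * I₀ y := by
        field_simp
      have key : (D0 y * S y + I₀ y * (-2 / S y)) * S y = 0 := by
        calc (D0 y * S y + I₀ y * (-2 / S y)) * S y
            = D0 y * (S y * S y) + I₀ y * (-2 / S y) * S y := by ring
          _ = (1 - 4*y) * D0 y - 2 * I₀ y := by rw [hsq, e1]; ring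
          _ = 0 := by linarith [h2]
      exact (mul_eq_zero.1 key).resolve_right hS.ne'
    rwa [hval] at hd
  have := const_aux h (mem_iff.2 hx)
  simpa [I0_zero, S_zero] using this

lemma I0_pos {x : ℝ} (hx : |x| < 1/4) : 0 < I₀ x := by
  have h := I0_closed hx
  have hS := S_pos hx
  nlinarith

lemma I0_inv {x : ℝ} (hx : |x| < 1/4) : I₀ x = (S x)⁻¹ := by
  have h := I0_closed hx
  field_simp [(S_pos hx).ne']
  linarith [h]

noncomputable def L (x : ℝ) : ℝ := ∑' d : ℕ, l d * x ^ d

lemma l_succ_mul (d : ℕ) : ((d:ℝ)+1) * l (d+1) = c d := by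
  have h : ((d:ℝ)+1) ≠ 0 := by positivity
  simp only [l]
  field_simp

lemma hasDerivAt_L {x : ℝ} (hx : |x| < 1/4) : HasDerivAt L (I₀ x) x := by
  have h := hasDerivAt_tsum_aux (K := 1) (fun d => by rw [one_mul]; exact l_abs_le d) hx
  have he : (∑' d : ℕ, ((d:ℝ)+1) * l (d+1) * x ^ d) = I₀ x := by
    rw [I0_eq]
    apply tsum_congr; intro d
    rw [l_succ_mul]
  rwa [he] at h

lemma L_zero : L 0 = 0 := by
  rw [L]
  have h : ∀ d : ℕ, l d * (0:ℝ) ^ d = 0 := by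
    intro d
    cases d with
    | zero => simp [l]
    | succ n => simp [zero_pow]
  rw [tsum_congr h, tsum_zero]

lemma L_closed {x : ℝ} (hx : |x| < 1/4) : L x = (1 - S x)/2 := by
  have h : ∀ y ∈ Set.Ioo (-(1/4):ℝ) (1/4), HasDerivAt (fun z => L z - (1 - S z)/2) 0 y := by
    intro y hy
    have hy' : |y| < 1/4 := mem_iff.1 hy
    have hC : HasDerivAt (fun z => (1 - S z)/2) (1 / S y) y := by
      have h2 := ((hasDerivAt_const y (1:ℝ)).sub (hasDerivAt_S hy')).div_const 2
      refine h2.congr_deriv ?_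
      have hS := (S_pos hy').ne'
      ring
    have := (hasDerivAt_L hy').sub hC
    have hval : I₀ y - 1 / S y = 0 := by
      rw [I0_inv hy', one_div]
      ring
    rwa [hval] at this
  have := const_aux h (mem_iff.2 hx)
  rw [L_zero, S_zero] at this
  norm_num at this
  linarith

noncomputable def E (x : ℝ) : ℝ := ∑' d : ℕ, e d * x ^ d

noncomputable def D1 (x : ℝ) : ℝ := ∑' d : ℕ, ((d:ℝ)+1) * e (d+1) * x ^ d

lemma I1_eq (x : ℝ) : I₁ x = 2 * E x := rfl

lemma hasDerivAt_E {x : ℝ} (hx : |x| < 1/4) : HasDerivAt E (D1 x) x :=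
  hasDerivAt_tsum_aux (K := 1) (fun d => by rw [one_mul]; exact e_abs_le d) hx

lemma summable_e {x : ℝ} (hx : |x| < 1/4) : Summable (fun d : ℕ => e d * x ^ d) := by
  apply summable_aux (K := 1) _ hx
  intro d
  rw [one_mul]
  have h4 : (0:ℝ) < 4 ^ d := pow_pos (by norm_num) d
  calc |e d| ≤ 4 ^ d := e_abs_le d
    _ ≤ ((d:ℝ)+1) * 4 ^ d := by nlinarith [Nat.cast_nonneg (α := ℝ) d]

lemma summable_de {x : ℝ} (hx : |x| < 1/4) : Summable (fun d : ℕ => (d:ℝ) * e d * x ^ d) := by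
  apply summable_aux (K := 1) _ hx
  intro d
  rw [one_mul, abs_mul, Nat.abs_cast]
  have h4 : (0:ℝ) < 4 ^ d := pow_pos (by norm_num) d
  have he := e_abs_le d
  have h0 := abs_nonneg (e d)
  nlinarith [Nat.cast_nonneg (α := ℝ) d]

lemma summable_4d2e {x : ℝ} (hx : |x| < 1/4) :
    Summable (fun d : ℕ => (4*(d:ℝ)+2) * e d * x ^ d) := by
  apply summable_aux (K := 4) _ hx
  intro d
  rw [abs_mul]
  have h1 : |4*(d:ℝ)+2| = 4*(d:ℝ)+2 := abs_of_pos (by positivity)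
  rw [h1]
  have h4 : (0:ℝ) < 4 ^ d := pow_pos (by norm_num) d
  have he := e_abs_le d
  have h0 := abs_nonneg (e d)
  nlinarith [Nat.cast_nonneg (α := ℝ) d]

lemma summable_cd1 {x : ℝ} (hx : |x| < 1/4) :
    Summable (fun d : ℕ => c d / ((d:ℝ)+1) * x ^ d) := by
  apply summable_aux (K := 1) _ hx
  intro d
  rw [one_mul]
  have hp : (0:ℝ) < (d:ℝ)+1 := by positivity
  have h1 : |c d / ((d:ℝ)+1)| = c d / ((d:ℝ)+1) := abs_of_pos (div_pos (c_pos d) hp)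
  rw [h1]
  have h4 : (0:ℝ) < 4 ^ d := pow_pos (by norm_num) d
  have : c d / ((d:ℝ)+1) ≤ c d := by
    apply div_le_self (c_pos d).le; linarith
  calc c d / ((d:ℝ)+1) ≤ c d := this
    _ ≤ 4 ^ d := c_le d
    _ ≤ ((d:ℝ)+1) * 4 ^ d := by nlinarith [Nat.cast_nonneg (α := ℝ) d]

lemma summable_l {x : ℝ} (hx : |x| < 1/4) : Summable (fun d : ℕ => l d * x ^ d) := by
  apply summable_aux (K := 1) _ hx
  intro d
  rw [one_mul]
  have h4 : (0:ℝ) < 4 ^ d := pow_pos (by norm_num) d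
  calc |l d| ≤ 4 ^ d := l_abs_le d
    _ ≤ ((d:ℝ)+1) * 4 ^ d := by nlinarith [Nat.cast_nonneg (α := ℝ) d]

lemma xD1 {x : ℝ} (hx : |x| < 1/4) : x * D1 x = ∑' d : ℕ, (d:ℝ) * e d * x ^ d := by
  have h1 : x * D1 x = ∑' d : ℕ, ((d:ℝ)+1) * e (d+1) * x ^ (d+1) := by
    rw [D1, ← tsum_mul_left]
    apply tsum_congr; intro d; ring
  rw [h1, Summable.tsum_eq_zero_add (summable_de hx)]
  push_cast
  simp

lemma D1_c {x : ℝ} : D1 x = ∑' d : ℕ, ((4*(d:ℝ)+2) * e d + c d / ((d:ℝ)+1)) * x ^ d := by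
  rw [D1]
  apply tsum_congr; intro d
  rw [e_rec d]

lemma summable_rec {x : ℝ} (hx : |x| < 1/4) :
    Summable (fun d : ℕ => ((4*(d:ℝ)+2) * e d + c d / ((d:ℝ)+1)) * x ^ d) := by
  have h1 := (summable_4d2e hx).add (summable_cd1 hx)
  apply h1.congr
  intro d; ring

lemma key_identity {x : ℝ} (hx : |x| < 1/4) :
    x * ((1 - 4*x) * D1 x - 2 * E x) = L x := by
  have step1 : (1 - 4*x) * D1 x - 2 * E x = ∑' d : ℕ, c d / ((d:ℝ)+1) * x ^ d := by
    have sB : Summable (fun d : ℕ => 4*((d:ℝ) * e d * x ^ d)) := (summable_de hx).mul_left 4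
    have sC : Summable (fun d : ℕ => 2*(e d * x ^ d)) := (summable_e hx).mul_left 2
    calc (1 - 4*x) * D1 x - 2 * E x = D1 x - 4*(x * D1 x) - 2 * E x := by ring
      _ = (∑' d : ℕ, ((4*(d:ℝ)+2) * e d + c d / ((d:ℝ)+1)) * x ^ d)
          - (∑' d : ℕ, 4*((d:ℝ) * e d * x ^ d)) - ∑' d : ℕ, 2*(e d * x ^ d) := by
          rw [xD1 hx, D1_c, ← tsum_mul_left, E, ← tsum_mul_left]
      _ = ∑' d : ℕ, (((4*(d:ℝ)+2) * e d + c d / ((d:ℝ)+1)) * x ^ d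
          - 4*((d:ℝ) * e d * x ^ d) - 2*(e d * x ^ d)) := by
          rw [← Summable.tsum_sub (summable_rec hx) sB, ← Summable.tsum_sub ((summable_rec hx).sub sB) sC]
      _ = ∑' d : ℕ, c d / ((d:ℝ)+1) * x ^ d := by
          apply tsum_congr; intro d; ring
  rw [step1]
  have step2 : x * (∑' d : ℕ, c d / ((d:ℝ)+1) * x ^ d)
      = ∑' d : ℕ, c d / ((d:ℝ)+1) * x ^ (d+1) := by
    rw [← tsum_mul_left]
    apply tsum_congr; intro d; ring
  rw [step2, L, Summable.tsum_eq_zero_add (summable_l hx)]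
  simp only [l]
  simp

lemma E_zero : E 0 = 0 := by
  rw [E]
  have h : ∀ d : ℕ, e d * (0:ℝ) ^ d = 0 := by
    intro d
    cases d with
    | zero => simp [e]
    | succ n => simp [zero_pow]
  rw [tsum_congr h, tsum_zero]

lemma e_one : e 1 = 1 := by
  unfold e c
  norm_num [Nat.centralBinom, harmonic_succ]

lemma D1_zero : D1 0 = 1 := by
  rw [D1, tsum_eq_single 0 (fun b hb => by simp [zero_pow hb])]
  simp [e_one]

lemma one_add_S_pos {x : ℝ} (hx : |x| < 1/4) : 0 < (1 + S x)/2 := by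
  have := S_pos hx; linarith

lemma hasDerivAt_logterm {x : ℝ} (hx : |x| < 1/4) :
    HasDerivAt (fun z => Real.log ((1 + S z)/2)) (-2/(S x * (1 + S x))) x := by
  have hv : HasDerivAt (fun z => (1 + S z)/2) (-1 / S x) x := by
    have h2 := ((hasDerivAt_const x (1:ℝ)).add (hasDerivAt_S hx)).div_const 2
    refine h2.congr_deriv ?_
    have hS := (S_pos hx).ne'
    ring
  have h3 := hv.log (one_add_S_pos hx).ne'
  convert h3 using 1
  have hS := (S_pos hx).ne'
  have h1S : (1 + S x) ≠ 0 := by nlinarith [S_pos hx]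
  field_simp

lemma G_eq {x : ℝ} (hx : |x| < 1/4) :
    2 * E x * S x + 2 * Real.log ((1 + S x)/2) = 0 := by
  have h : ∀ y ∈ Set.Ioo (-(1/4):ℝ) (1/4),
      HasDerivAt (fun z => 2 * E z * S z + 2 * Real.log ((1 + S z)/2)) 0 y := by
    intro y hy
    have hy' : |y| < 1/4 := mem_iff.1 hy
    have hd := (((hasDerivAt_E hy').const_mul 2).mul (hasDerivAt_S hy')).add
      ((hasDerivAt_logterm hy').const_mul 2)
    have hval : 2 * D1 y * S y + 2 * E y * (-2 / S y) + 2 * (-2/(S y * (1 + S y))) = 0 := by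
      have hS := S_pos hy'
      have h1S : (0:ℝ) < 1 + S y := by linarith
      have hsq := S_sq hy'
      rcases eq_or_ne y 0 with rfl | hy0
      · rw [D1_zero, E_zero, S_zero]
        norm_num
      · have R : (1 - 4*y) * D1 y - 2 * E y = (1 - S y)/(2*y) := by
          rw [eq_div_iff (by simpa using hy0 : 2*y ≠ 0)]
          have := key_identity hy'
          rw [L_closed hy'] at this
          linarith [this]
        have hE : E y = ((1-4*y)*D1 y)/2 - (1-S y)/(4*y) := by
          field_simp at R ⊢
          linarith
        rw [hE, ← hsq]
        field_simp
        linear_combination (-4) * hsq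
    rwa [hval] at hd
  have h0 := const_aux h (mem_iff.2 hx)
  rw [E_zero, S_zero] at h0
  norm_num at h0
  rw [h0]

noncomputable def u (z : ℝ) : ℝ := -2 * Real.log ((1 + S z)/2)

lemma hasDerivAt_u {x : ℝ} (hx : |x| < 1/4) :
    HasDerivAt u (4/(S x * (1 + S x))) x := by
  have h := (hasDerivAt_logterm hx).const_mul (-2)
  have : -2 * (-2/(S x * (1 + S x))) = 4/(S x * (1 + S x)) := by ring
  rwa [this] at h

lemma ratio_eq {x : ℝ} (hx : |x| < 1/4) : I₁ x / I₀ x = u x := by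
  have hG := G_eq hx
  have hS := S_pos hx
  have hI0 := I0_inv hx
  rw [I1_eq, hI0, u]
  have hE : 2 * E x = -2 * Real.log ((1 + S x)/2) / S x := by
    rw [eq_div_iff hS.ne']
    linarith
  rw [hE]
  field_simp
end Aux

theorem I1_over_I0_deriv (q : ℝ) (hq : |q| < 1 / 4) :
    Summable (fun d : ℕ => (Nat.centralBinom d : ℝ) * q ^ d) ∧
    Summable (fun d : ℕ =>
      (Nat.centralBinom d : ℝ) * ((harmonic (2 * d) : ℝ) - (harmonic d : ℝ)) * q ^ d) ∧
    I₀ q ≠ 0 ∧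
    DifferentiableOn ℝ (fun x => I₁ x / I₀ x) (Set.Ioo (-(1 / 4)) (1 / 4)) ∧
    1 + q * deriv (fun x => I₁ x / I₀ x) q = 1 / Real.sqrt (1 - 4 * q) := by
  have hEq : Set.EqOn (fun x => I₁ x / I₀ x) Aux.u (Set.Ioo (-(1/4):ℝ) (1/4)) :=
    fun x hx => Aux.ratio_eq (Aux.mem_iff.1 hx)
  have hmem : q ∈ Set.Ioo (-(1/4):ℝ) (1/4) := Aux.mem_iff.2 hq
  refine ⟨Aux.summable_c hq, Aux.summable_e hq, (Aux.I0_pos hq).ne', ?_, ?_⟩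
  · exact DifferentiableOn.congr
      (fun x hx => ((Aux.hasDerivAt_u (Aux.mem_iff.1 hx)).differentiableAt).differentiableWithinAt)
      hEq
  · have hev : (fun x => I₁ x / I₀ x) =ᶠ[nhds q] Aux.u :=
      Filter.eventuallyEq_of_mem (Ioo_mem_nhds hmem.1 hmem.2) hEq
    rw [hev.deriv_eq, (Aux.hasDerivAt_u hq).deriv]
    have hS := Aux.S_pos hq
    have h1S : (0:ℝ) < 1 + Aux.S q := by linarith
    have hsq := Aux.S_sq hq
    rw [show Real.sqrt (1 - 4*q) = Aux.S q from rfl]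
    field_simp
    linear_combination hsq
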